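/- Let p be an odd prime, m ≥ 1, and let a, b be integers with p^m ≤ a, b < p^{m+1}. Write a = p·a' + a_0 and b = p·b' + b_0 with digits a_0, b_0 ∈ [0, p−1] (so p^{m−1} ≤ a', b' < p^m). Then: (i) if a_0 = b_0 = 0 then X_{ab} = X_{a'b'}; (ii) if a_0 = b_0 ≠ 0 then X_{ab} = 2·X_{a'b'}; (iii) if a_0 + b_0 = p then X_{ab} = Y_{a'b'} + Y_{b'a'}; (iv) otherwise (a_0 ≠ b_0 and a_0 + b_0 ≠ p) X_{ab} = 0. -/
import Mathlib


/-- For `p^m ≤ a < p^(m+1)` with base-`p` expansion `a = Σ_{i=0}^m a_i p^i` (so `a_m ≠ 0`),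
the set of descendants of `a` is
`Desc(a) = { a_m p^m + Σ_{i=0}^{m-1} ε_i a_i p^i : ε_i ∈ {1, -1} } ⊆ ℤ`. -/
def Desc (p m a : ℕ) : Set ℤ :=
  {d | ∃ ε : ℕ → ℤ, (∀ i, ε i = 1 ∨ ε i = -1) ∧
    d = ((a / p ^ m : ℕ) : ℤ) * (p : ℤ) ^ m +
      ∑ i ∈ Finset.range m, ε i * (((a / p ^ i % p : ℕ) : ℤ) * (p : ℤ) ^ i)}

/-- `X_{ab}` is the number of common descendants of `a` and `b`. -/
noncomputable def Xcard (p m a b : ℕ) : ℕ := (Desc p m a ∩ Desc p m b).ncard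

/-- `Y_{ab}` is the number of descendants `d` of `a` such that `d - 1` is a descendant of `b`. -/
noncomputable def Ycard (p m a b : ℕ) : ℕ := {d ∈ Desc p m a | d - 1 ∈ Desc p m b}.ncard

lemma desc_finite (p m a : ℕ) : (Desc p m a).Finite := by
  apply Set.Finite.subset (Set.finite_range (fun b : Fin m → Bool =>
    ((a / p ^ m : ℕ) : ℤ) * (p : ℤ) ^ m +
      ∑ i : Fin m, (if b i then (1:ℤ) else -1) * (((a / p ^ (i:ℕ) % p : ℕ) : ℤ) * (p : ℤ) ^ (i:ℕ))))
  rintro x ⟨ε, hε, rfl⟩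
  refine ⟨fun i => decide (ε i = 1), ?_⟩
  dsimp only
  rw [Fin.sum_univ_eq_sum_range
    (fun i => (if decide (ε i = 1) then (1:ℤ) else -1) * (((a / p ^ i % p : ℕ) : ℤ) * (p : ℤ) ^ i))]
  congr 1
  apply Finset.sum_congr rfl
  intro i _
  rcases hε i with h | h <;> simp [h]

lemma mem_desc_succ {p n a : ℕ} (x : ℤ) :
    x ∈ Desc p (n + 1) a ↔ ∃ d ∈ Desc p n (a / p), ∃ s : ℤ, (s = 1 ∨ s = -1) ∧
      x = (p : ℤ) * d + s * ((a % p : ℕ) : ℤ) := by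
  have hdiv : ∀ i : ℕ, a / p / p ^ i = a / p ^ (i + 1) := by
    intro i
    rw [Nat.div_div_eq_div_mul, ← pow_succ']
  have hsum : ∀ ε : ℕ → ℤ,
      ∑ i ∈ Finset.range n, ε (i + 1) * (((a / p ^ (i + 1) % p : ℕ) : ℤ) * (p : ℤ) ^ (i + 1))
      = (p : ℤ) * ∑ i ∈ Finset.range n, ε (i + 1) * (((a / p / p ^ i % p : ℕ) : ℤ) * (p : ℤ) ^ i) := by
    intro ε
    rw [Finset.mul_sum]
    apply Finset.sum_congr rfl
    intro i _
    rw [hdiv, pow_succ]; ring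
  constructor
  · rintro ⟨ε, hε, rfl⟩
    refine ⟨((a / p / p ^ n : ℕ) : ℤ) * (p : ℤ) ^ n +
      ∑ i ∈ Finset.range n, ε (i + 1) * (((a / p / p ^ i % p : ℕ) : ℤ) * (p : ℤ) ^ i),
      ⟨fun i => ε (i + 1), fun i => hε (i + 1), rfl⟩, ε 0, hε 0, ?_⟩
    rw [Finset.sum_range_succ', hsum ε, hdiv n]
    simp only [pow_zero, Nat.pow_zero, Nat.div_one, mul_one]
    rw [pow_succ]; ring
  · rintro ⟨d, ⟨ε, hε, rfl⟩, s, hs, rfl⟩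
    refine ⟨fun i => Nat.casesOn i s (fun j => ε j), fun i => by cases i <;> simp [hs, hε], ?_⟩
    rw [Finset.sum_range_succ']
    have : ∑ i ∈ Finset.range n,
        (fun i => Nat.casesOn i s (fun j => ε j) : ℕ → ℤ) (i + 1) *
          (((a / p ^ (i + 1) % p : ℕ) : ℤ) * (p : ℤ) ^ (i + 1))
        = (p : ℤ) * ∑ i ∈ Finset.range n, ε i * (((a / p / p ^ i % p : ℕ) : ℤ) * (p : ℤ) ^ i) := by
      rw [Finset.mul_sum]
      apply Finset.sum_congr rfl
      intro i _
      rw [hdiv, pow_succ]; ring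
    rw [this, hdiv n]
    simp only [pow_zero, Nat.pow_zero, Nat.div_one, mul_one]
    have h0 : (Nat.rec s (fun n _ => ε n) 0 : ℤ) = s := rfl
    rw [pow_succ, h0]; ring

lemma key_mul {p : ℤ} (hp : 0 < p) {k c : ℤ} (h : p * k = c) (h1 : -(2*p) < c) (h2 : c < 2*p) :
    (k = -1 ∧ c = -p) ∨ (k = 0 ∧ c = 0) ∨ (k = 1 ∧ c = p) := by
  have hk2 : k < 2 := by nlinarith
  have hk2' : -2 < k := by nlinarith
  interval_cases k <;> omega

/-- Recursion for the number of common descendants, in terms of the last base-`p` digits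
`a₀ = a % p`, `b₀ = b % p` and the truncations `a' = a / p`, `b' = b / p`. -/
theorem Xcard_recursion {p : ℕ} (hp : p.Prime) (hodd : Odd p)
    {m a b : ℕ} (hm : 1 ≤ m)
    (ha₁ : p ^ m ≤ a) (ha₂ : a < p ^ (m + 1))
    (hb₁ : p ^ m ≤ b) (hb₂ : b < p ^ (m + 1)) :
    (a % p = 0 → b % p = 0 → Xcard p m a b = Xcard p (m - 1) (a / p) (b / p)) ∧
    (a % p = b % p → a % p ≠ 0 → Xcard p m a b = 2 * Xcard p (m - 1) (a / p) (b / p)) ∧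
    (a % p + b % p = p →
      Xcard p m a b = Ycard p (m - 1) (a / p) (b / p) + Ycard p (m - 1) (b / p) (a / p)) ∧
    (a % p ≠ b % p → a % p + b % p ≠ p → Xcard p m a b = 0) := by
  obtain ⟨n, rfl⟩ : ∃ n, m = n + 1 := ⟨m - 1, by omega⟩
  simp only [Nat.add_sub_cancel]
  have hp0 : 0 < p := hp.pos
  have hppos : (0 : ℤ) < (p : ℤ) := by exact_mod_cast hp0
  have hpz : ((p : ℤ)) ≠ 0 := hppos.ne'
  have hoddn : p % 2 = 1 := Nat.odd_iff.mp hodd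
  have haz : (0 : ℤ) ≤ ((a % p : ℕ) : ℤ) := Int.natCast_nonneg _
  have hbz : (0 : ℤ) ≤ ((b % p : ℕ) : ℤ) := Int.natCast_nonneg _
  have haz2 : ((a % p : ℕ) : ℤ) < (p : ℤ) := by exact_mod_cast Nat.mod_lt _ hp0
  have hbz2 : ((b % p : ℕ) : ℤ) < (p : ℤ) := by exact_mod_cast Nat.mod_lt _ hp0
  have h2az : 2 * ((a % p : ℕ) : ℤ) ≠ (p : ℤ) := by
    have : 2 * (a % p) ≠ p := by omega
    exact_mod_cast this
  have h2bz : 2 * ((b % p : ℕ) : ℤ) ≠ (p : ℤ) := by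
    have : 2 * (b % p) ≠ p := by omega
    exact_mod_cast this
  have hSfin : (Desc p n (a / p) ∩ Desc p n (b / p)).Finite :=
    (desc_finite p n (a / p)).subset Set.inter_subset_left
  have hinj : ∀ c : ℤ, Function.Injective (fun d : ℤ => (p : ℤ) * d + c) := by
    intro c x y h
    simp only at h
    exact mul_left_cancel₀ hpz (by linarith)
  refine ⟨?_, ?_, ?_, ?_⟩
  · -- case (i)
    intro ha0 hb0
    have hset : Desc p (n + 1) a ∩ Desc p (n + 1) b
        = (fun d : ℤ => (p : ℤ) * d) '' (Desc p n (a / p) ∩ Desc p n (b / p)) := by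
      ext x
      simp only [Set.mem_inter_iff, mem_desc_succ, Set.mem_image, ha0, hb0, Nat.cast_zero,
        mul_zero, add_zero]
      constructor
      · rintro ⟨⟨d, hd, s, hs, rfl⟩, ⟨e, he, t, ht, hxe⟩⟩
        have hde : d = e := mul_left_cancel₀ hpz hxe
        exact ⟨d, ⟨hd, hde ▸ he⟩, rfl⟩
      · rintro ⟨d, ⟨hd, he⟩, rfl⟩
        exact ⟨⟨d, hd, 1, Or.inl rfl, rfl⟩, ⟨d, he, 1, Or.inl rfl, rfl⟩⟩
    unfold Xcard
    rw [hset, Set.ncard_image_of_injective _ (mul_right_injective₀ hpz)]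
  · -- case (ii)
    intro hab ha0
    have ha0z : ((a % p : ℕ) : ℤ) ≠ 0 := by exact_mod_cast ha0
    have hcab : ((b % p : ℕ) : ℤ) = ((a % p : ℕ) : ℤ) := by rw [hab]
    have hset : Desc p (n + 1) a ∩ Desc p (n + 1) b
        = (fun d : ℤ => (p : ℤ) * d + ((a % p : ℕ) : ℤ)) ''
            (Desc p n (a / p) ∩ Desc p n (b / p)) ∪
          (fun d : ℤ => (p : ℤ) * d + (-((a % p : ℕ) : ℤ))) ''
            (Desc p n (a / p) ∩ Desc p n (b / p)) := by
      ext x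
      simp only [Set.mem_inter_iff, mem_desc_succ, Set.mem_union, Set.mem_image]
      constructor
      · rintro ⟨⟨d, hd, s, hs, rfl⟩, ⟨e, he, t, ht, hxe⟩⟩
        rw [hcab] at hxe
        rcases hs with rfl | rfl <;> rcases ht with rfl | rfl
        · have hde : d - e = 0 := by
            have h0 : (p : ℤ) * (d - e) = 0 := by linear_combination hxe
            exact (mul_eq_zero.mp h0).resolve_left hpz
          have hde' : d = e := by linarith
          exact Or.inl ⟨d, ⟨hd, hde' ▸ he⟩, by ring⟩
        · exfalso
          have hk : (p : ℤ) * (d - e) = -(2 * ((a % p : ℕ) : ℤ)) := by linear_combination hxe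
          rcases key_mul hppos hk (by linarith) (by linarith) with ⟨_, h⟩ | ⟨_, h⟩ | ⟨_, h⟩ <;>
            omega
        · exfalso
          have hk : (p : ℤ) * (d - e) = 2 * ((a % p : ℕ) : ℤ) := by linear_combination hxe
          rcases key_mul hppos hk (by linarith) (by linarith) with ⟨_, h⟩ | ⟨_, h⟩ | ⟨_, h⟩ <;>
            omega
        · have hde : d - e = 0 := by
            have h0 : (p : ℤ) * (d - e) = 0 := by linear_combination hxe
            exact (mul_eq_zero.mp h0).resolve_left hpz
          have hde' : d = e := by linarith
          exact Or.inr ⟨d, ⟨hd, hde' ▸ he⟩, by ring⟩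
      · rintro (⟨d, ⟨hd, he⟩, rfl⟩ | ⟨d, ⟨hd, he⟩, rfl⟩)
        · exact ⟨⟨d, hd, 1, Or.inl rfl, by ring⟩, ⟨d, he, 1, Or.inl rfl, by rw [hcab]; ring⟩⟩
        · exact ⟨⟨d, hd, -1, Or.inr rfl, by ring⟩, ⟨d, he, -1, Or.inr rfl, by rw [hcab]; ring⟩⟩
    have hdisj : Disjoint
        ((fun d : ℤ => (p : ℤ) * d + ((a % p : ℕ) : ℤ)) ''
            (Desc p n (a / p) ∩ Desc p n (b / p)))
        ((fun d : ℤ => (p : ℤ) * d + (-((a % p : ℕ) : ℤ))) ''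
            (Desc p n (a / p) ∩ Desc p n (b / p))) := by
      rw [Set.disjoint_left]
      rintro x ⟨d, hd, rfl⟩ ⟨e, he, hx⟩
      simp only at hx
      have hk : (p : ℤ) * (e - d) = 2 * ((a % p : ℕ) : ℤ) := by linear_combination hx
      rcases key_mul hppos hk (by linarith) (by linarith) with ⟨_, h⟩ | ⟨_, h⟩ | ⟨_, h⟩ <;> omega
    unfold Xcard
    rw [hset, Set.ncard_union_eq hdisj (hSfin.image _) (hSfin.image _),
      Set.ncard_image_of_injective _ (hinj _), Set.ncard_image_of_injective _ (hinj _)]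
    omega
  · -- case (iii)
    intro habs
    have hsz : ((a % p : ℕ) : ℤ) + ((b % p : ℕ) : ℤ) = (p : ℤ) := by exact_mod_cast habs
    have hset : Desc p (n + 1) a ∩ Desc p (n + 1) b
        = (fun d : ℤ => (p : ℤ) * d + (-((a % p : ℕ) : ℤ))) ''
            {d ∈ Desc p n (a / p) | d - 1 ∈ Desc p n (b / p)} ∪
          (fun e : ℤ => (p : ℤ) * e + (-((b % p : ℕ) : ℤ))) ''
            {e ∈ Desc p n (b / p) | e - 1 ∈ Desc p n (a / p)} := by
      ext x
      simp only [Set.mem_inter_iff, mem_desc_succ, Set.mem_union, Set.mem_image,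
        Set.mem_setOf_eq]
      constructor
      · rintro ⟨⟨d, hd, s, hs, rfl⟩, ⟨e, he, t, ht, hxe⟩⟩
        rcases hs with rfl | rfl <;> rcases ht with rfl | rfl
        · exfalso
          have hk : (p : ℤ) * (d - e) = ((b % p : ℕ) : ℤ) - ((a % p : ℕ) : ℤ) := by
            linear_combination hxe
          rcases key_mul hppos hk (by linarith) (by linarith) with ⟨_, h⟩ | ⟨_, h⟩ | ⟨_, h⟩ <;>
            omega
        · -- s = 1, t = -1 : e = d + 1
          have hk : (p : ℤ) * (d - e) = -((b % p : ℕ) : ℤ) - ((a % p : ℕ) : ℤ) := by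
            linear_combination hxe
          rcases key_mul hppos hk (by linarith) (by linarith) with ⟨hde, h⟩ | ⟨_, h⟩ | ⟨_, h⟩
          · have hde' : e = d + 1 := by linarith
            refine Or.inr ⟨e, ⟨he, ?_⟩, ?_⟩
            · rw [show e - 1 = d by linarith]; exact hd
            · rw [hde']; linear_combination -hsz
          · omega
          · omega
        · -- s = -1, t = 1 : d = e + 1
          have hk : (p : ℤ) * (d - e) = ((b % p : ℕ) : ℤ) + ((a % p : ℕ) : ℤ) := by
            linear_combination hxe
          rcases key_mul hppos hk (by linarith) (by linarith) with ⟨_, h⟩ | ⟨_, h⟩ | ⟨hde, h⟩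
          · omega
          · omega
          · refine Or.inl ⟨d, ⟨hd, ?_⟩, ?_⟩
            · rw [show d - 1 = e by linarith]; exact he
            · ring
        · exfalso
          have hk : (p : ℤ) * (d - e) = ((a % p : ℕ) : ℤ) - ((b % p : ℕ) : ℤ) := by
            linear_combination hxe
          rcases key_mul hppos hk (by linarith) (by linarith) with ⟨_, h⟩ | ⟨_, h⟩ | ⟨_, h⟩ <;>
            omega
      · rintro (⟨d, ⟨hd, hd1⟩, rfl⟩ | ⟨e, ⟨he, he1⟩, rfl⟩)
        · refine ⟨⟨d, hd, -1, Or.inr rfl, by ring⟩, ⟨d - 1, hd1, 1, Or.inl rfl, ?_⟩⟩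
          linarith [hsz]
        · refine ⟨⟨e - 1, he1, 1, Or.inl rfl, ?_⟩, ⟨e, he, -1, Or.inr rfl, by ring⟩⟩
          linarith [hsz]
    have hY1fin : ({d ∈ Desc p n (a / p) | d - 1 ∈ Desc p n (b / p)}).Finite :=
      (desc_finite p n (a / p)).subset (fun x hx => hx.1)
    have hY2fin : ({e ∈ Desc p n (b / p) | e - 1 ∈ Desc p n (a / p)}).Finite :=
      (desc_finite p n (b / p)).subset (fun x hx => hx.1)
    have hdisj : Disjoint
        ((fun d : ℤ => (p : ℤ) * d + (-((a % p : ℕ) : ℤ))) ''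
            {d ∈ Desc p n (a / p) | d - 1 ∈ Desc p n (b / p)})
        ((fun e : ℤ => (p : ℤ) * e + (-((b % p : ℕ) : ℤ))) ''
            {e ∈ Desc p n (b / p) | e - 1 ∈ Desc p n (a / p)}) := by
      rw [Set.disjoint_left]
      rintro x ⟨d, hd, rfl⟩ ⟨e, he, hx⟩
      simp only at hx
      have hk : (p : ℤ) * (e - d) = ((b % p : ℕ) : ℤ) - ((a % p : ℕ) : ℤ) := by
        linear_combination hx
      rcases key_mul hppos hk (by linarith) (by linarith) with ⟨_, h⟩ | ⟨_, h⟩ | ⟨_, h⟩ <;> omega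
    unfold Xcard Ycard
    rw [hset, Set.ncard_union_eq hdisj (hY1fin.image _) (hY2fin.image _),
      Set.ncard_image_of_injective _ (hinj _), Set.ncard_image_of_injective _ (hinj _)]
  · -- case (iv)
    intro hne hnsum
    have hnez : ((a % p : ℕ) : ℤ) ≠ ((b % p : ℕ) : ℤ) := by exact_mod_cast hne
    have hnsz : ((a % p : ℕ) : ℤ) + ((b % p : ℕ) : ℤ) ≠ (p : ℤ) := by exact_mod_cast hnsum
    have hset : Desc p (n + 1) a ∩ Desc p (n + 1) b = ∅ := by
      rw [Set.eq_empty_iff_forall_notMem]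
      rintro x ⟨hxa, hxb⟩
      rw [mem_desc_succ] at hxa hxb
      obtain ⟨d, hd, s, hs, rfl⟩ := hxa
      obtain ⟨e, he, t, ht, hxe⟩ := hxb
      rcases hs with rfl | rfl <;> rcases ht with rfl | rfl
      · have hk : (p : ℤ) * (d - e) = ((b % p : ℕ) : ℤ) - ((a % p : ℕ) : ℤ) := by
          linear_combination hxe
        rcases key_mul hppos hk (by linarith) (by linarith) with ⟨_, h⟩ | ⟨_, h⟩ | ⟨_, h⟩ <;> omega
      · have hk : (p : ℤ) * (d - e) = -((b % p : ℕ) : ℤ) - ((a % p : ℕ) : ℤ) := by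
          linear_combination hxe
        rcases key_mul hppos hk (by linarith) (by linarith) with ⟨_, h⟩ | ⟨_, h⟩ | ⟨_, h⟩ <;> omega
      · have hk : (p : ℤ) * (d - e) = ((b % p : ℕ) : ℤ) + ((a % p : ℕ) : ℤ) := by
          linear_combination hxe
        rcases key_mul hppos hk (by linarith) (by linarith) with ⟨_, h⟩ | ⟨_, h⟩ | ⟨_, h⟩ <;> omega
      · have hk : (p : ℤ) * (d - e) = ((a % p : ℕ) : ℤ) - ((b % p : ℕ) : ℤ) := by
          linear_combination hxe
        rcases key_mul hppos hk (by linarith) (by linarith) with ⟨_, h⟩ | ⟨_, h⟩ | ⟨_, h⟩ <;> omega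
    unfold Xcard
    rw [hset, Set.ncard_empty]
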